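/- For κ < 0 and κ̃ < 0, the function φ(t) = (κ̃/κ)^{1/4} is a constant solution of the ODE φ''(t) + κ φ(t) = κ̃/φ(t)³; moreover, any positive solution φ of this ODE with κ = κ̃ = −1 that is bounded above and below by positive constants on all of ℝ must be constant equal to 1. -/

import Mathlib

/-- An auxiliary lemma: `a * exp (2t)` cannot stay `≤ K` for all `t ≥ 0` if `a > 0`. -/
lemma aux_exp_unbounded {a K : ℝ} (ha : 0 < a)
    (h : ∀ t : ℝ, 0 ≤ t → a * Real.exp (2 * t) ≤ K) : False := by
  set T := max 0 (K / a) with hT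
  have hT0 : 0 ≤ T := le_max_left _ _
  have h1 := h T hT0
  have h2 := Real.add_one_le_exp (2 * T)
  have h3 : K / a ≤ T := le_max_right _ _
  have h4 : K ≤ a * T := by
    rw [div_le_iff₀ ha] at h3; linarith
  nlinarith [mul_le_mul_of_nonneg_left h2 ha.le, mul_nonneg ha.le hT0]

/-- For `κ < 0`, `κ̃ < 0`, the constant `(κ̃/κ)^{1/4}` solves
`φ'' + κ φ = κ̃/φ³`; and any positive solution with `κ = κ̃ = -1` that is
pinched between positive constants on all of `ℝ` is identically `1`. -/
theorem projective_ode_constant_solution (κ κt : ℝ) (hκ : κ < 0) (hκt : κt < 0) :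
    (∀ t : ℝ,
      deriv (deriv (fun _ : ℝ => (κt / κ) ^ ((1 : ℝ) / 4))) t +
        κ * (κt / κ) ^ ((1 : ℝ) / 4) =
      κt / ((κt / κ) ^ ((1 : ℝ) / 4)) ^ 3) ∧
    (∀ φ : ℝ → ℝ, ContDiff ℝ 2 φ → (∀ t : ℝ, 0 < φ t) →
      (∀ t : ℝ, deriv (deriv φ) t + (-1) * φ t = (-1) / (φ t) ^ 3) →
      (∃ m M : ℝ, 0 < m ∧ ∀ t : ℝ, m ≤ φ t ∧ φ t ≤ M) →
      ∀ t : ℝ, φ t = 1) := by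
  constructor
  · -- Part 1: the constant solution
    intro t
    have hq : (0:ℝ) < κt / κ := div_pos_of_neg_of_neg hκt hκ
    set c : ℝ := (κt / κ) ^ ((1:ℝ)/4) with hcdef
    have hcpos : 0 < c := Real.rpow_pos_of_pos hq _
    have h4 : c ^ (4:ℕ) = κt / κ := by
      rw [hcdef, ← Real.rpow_natCast ((κt/κ) ^ ((1:ℝ)/4)) 4, ← Real.rpow_mul hq.le]
      norm_num
    have hder : deriv (deriv (fun _ : ℝ => c)) t = 0 := by
      simp [deriv_const]
    rw [hder, zero_add, eq_div_iff (pow_ne_zero 3 hcpos.ne')]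
    have hκ0 : κ ≠ 0 := ne_of_lt hκ
    calc κ * c * c ^ 3 = κ * c ^ (4:ℕ) := by ring
      _ = κ * (κt / κ) := by rw [h4]
      _ = κt := by field_simp
  · -- Part 2: rigidity
    intro φ hφ hpos hode hbd
    obtain ⟨m, M, hm, hmM⟩ := hbd
    have hd1 : Differentiable ℝ φ := hφ.differentiable (by norm_num)
    have hd2 : Differentiable ℝ (deriv φ) := by
      have h2 : ContDiff ℝ ((1:ℕ∞)+1) φ := by norm_num; exact hφ
      exact (contDiff_succ_iff_deriv.mp h2).2.2.differentiable (by norm_num)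
    -- rewrite the ODE
    have hode' : ∀ t, deriv (deriv φ) t = φ t - ((φ t)^3)⁻¹ := by
      intro t
      have h := hode t
      rw [neg_one_mul, div_eq_mul_inv, neg_one_mul] at h
      linarith
    -- the energy
    set C : ℝ := (deriv φ 0)^2 - (φ 0)^2 - ((φ 0)^2)⁻¹ with hCdef
    have hE : ∀ t, HasDerivAt (fun t => (deriv φ t)^2 - (φ t)^2 - ((φ t)^2)⁻¹) 0 t := by
      intro t
      have hφt : φ t ≠ 0 := (hpos t).ne'
      have h1 : HasDerivAt φ (deriv φ t) t := (hd1 t).hasDerivAt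
      have h2 : HasDerivAt (deriv φ) (deriv (deriv φ) t) t := (hd2 t).hasDerivAt
      have hsq : HasDerivAt (fun t => (φ t)^2) (2 * φ t * deriv φ t) t := by
        simpa [mul_comm, mul_assoc] using h1.fun_pow 2
      have hinv : HasDerivAt (fun t => ((φ t)^2)⁻¹)
          (-(2 * φ t * deriv φ t) / ((φ t)^2)^2) t := hsq.inv (pow_ne_zero 2 hφt)
      have h2sq : HasDerivAt (fun t => (deriv φ t)^2)
          (2 * deriv φ t * deriv (deriv φ) t) t := by
        simpa [mul_comm, mul_assoc] using h2.fun_pow 2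
      have := (h2sq.fun_sub hsq).fun_sub hinv
      refine this.congr_deriv ?_; symm
      rw [hode' t]
      field_simp
      ring
    have hEconst : ∀ t, (deriv φ t)^2 - (φ t)^2 - ((φ t)^2)⁻¹ = C := by
      intro t
      have := is_const_of_deriv_eq_zero (f := fun t => (deriv φ t)^2 - (φ t)^2 - ((φ t)^2)⁻¹)
        (fun x => (hE x).differentiableAt) (fun x => (hE x).deriv) t 0
      rw [this]
    clear_value C
    clear hCdef hE
    -- the derivative of u = φ²
    set W : ℝ → ℝ := fun t => 2 * φ t * deriv φ t with hWdef
    have hu : ∀ t, HasDerivAt (fun t => (φ t)^2) (W t) t := by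
      intro t
      simpa [hWdef, mul_comm, mul_assoc] using ((hd1 t).hasDerivAt).fun_pow 2
    have hW : ∀ t, HasDerivAt W (4 * (φ t)^2 + 2*C) t := by
      intro t
      have hφt : φ t ≠ 0 := (hpos t).ne'
      have h1 : HasDerivAt φ (deriv φ t) t := (hd1 t).hasDerivAt
      have h2 : HasDerivAt (deriv φ) (deriv (deriv φ) t) t := (hd2 t).hasDerivAt
      have hmul : HasDerivAt W
          ((2 * deriv φ t) * deriv φ t + (2 * φ t) * deriv (deriv φ) t) t := by
        simpa [hWdef, mul_assoc] using (h1.const_mul 2).fun_mul h2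
      convert hmul using 1
      rw [hode' t]
      have hEt := hEconst t
      have h5 : φ t * ((φ t)^3)⁻¹ = ((φ t)^2)⁻¹ := by field_simp
      linear_combination (-2 : ℝ) * hEt + 2 * h5
    -- G is constant
    set G : ℝ → ℝ := fun t => (W t + 2*(φ t)^2 + C) * Real.exp (-(2*t)) with hGdef
    have hGd : ∀ t, HasDerivAt G 0 t := by
      intro t
      have h1 : HasDerivAt (fun t => W t + 2*(φ t)^2 + C)
          ((4 * (φ t)^2 + 2*C) + 2 * W t) t :=
        ((hW t).add ((hu t).const_mul 2)).add_const C
      have hlin : HasDerivAt (fun t : ℝ => -(2*t)) (-2) t := by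
        simpa using ((hasDerivAt_id t).const_mul (2:ℝ)).fun_neg
      have h2 : HasDerivAt (fun t => Real.exp (-(2*t))) (Real.exp (-(2*t)) * (-2)) t :=
        hlin.exp
      have := h1.fun_mul h2
      refine this.congr_deriv ?_; symm
      ring
    have hGconst : ∀ t, G t = G 0 :=
      fun t => is_const_of_deriv_eq_zero (f := G)
        (fun x => (hGd x).differentiableAt) (fun x => (hGd x).deriv) t 0
    have hGeq : ∀ t, W t + 2*(φ t)^2 + C = G 0 * Real.exp (2*t) := by
      intro t
      have h : (W t + 2*(φ t)^2 + C) * Real.exp (-(2*t)) = G 0 := hGconst t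
      have he : Real.exp (-(2*t)) * Real.exp (2*t) = 1 := by
        rw [← Real.exp_add]; simp
      linear_combination Real.exp (2*t) * h + (-(W t + 2*(φ t)^2 + C)) * he
    -- H is constant
    set H : ℝ → ℝ := fun t => ((φ t)^2 + C/2) * Real.exp (2*t) - G 0 * Real.exp (4*t) / 4
      with hHdef
    have hHd : ∀ t, HasDerivAt H 0 t := by
      intro t
      have h1 : HasDerivAt (fun t => (φ t)^2 + C/2) (W t) t := (hu t).add_const _
      have hlin2 : HasDerivAt (fun t : ℝ => 2*t) (2:ℝ) t := by
        simpa using (hasDerivAt_id t).const_mul (2:ℝ)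
      have h2 : HasDerivAt (fun t => Real.exp (2*t)) (Real.exp (2*t) * 2) t := hlin2.exp
      have hlin4 : HasDerivAt (fun t : ℝ => 4*t) (4:ℝ) t := by
        simpa using (hasDerivAt_id t).const_mul (4:ℝ)
      have h4 : HasDerivAt (fun t => Real.exp (4*t)) (Real.exp (4*t) * 4) t := hlin4.exp
      have h5 : HasDerivAt (fun t => G 0 * Real.exp (4*t) / 4)
          (G 0 * (Real.exp (4*t) * 4) / 4) t := (h4.const_mul (G 0)).div_const 4
      have := (h1.fun_mul h2).fun_sub h5
      refine this.congr_deriv ?_; symm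
      have hge := hGeq t
      have hexp : Real.exp (2*t) * Real.exp (2*t) = Real.exp (4*t) := by
        rw [← Real.exp_add]; ring_nf
      linear_combination (-Real.exp (2*t)) * hge + (-(G 0)) * hexp
    have hHconst : ∀ t, H t = H 0 :=
      fun t => is_const_of_deriv_eq_zero (f := H)
        (fun x => (hHd x).differentiableAt) (fun x => (hHd x).deriv) t 0
    -- the explicit formula for φ²
    have key0 : ∀ t, (φ t)^2 + C/2 = H 0 * Real.exp (-(2*t)) + G 0 / 4 * Real.exp (2*t) := by
      intro t
      have h : ((φ t)^2 + C/2) * Real.exp (2*t) - G 0 * Real.exp (4*t) / 4 = H 0 :=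
        hHconst t
      have he : Real.exp (-(2*t)) * Real.exp (2*t) = 1 := by
        rw [← Real.exp_add]; simp
      have hexp : Real.exp (4*t) * Real.exp (-(2*t)) = Real.exp (2*t) := by
        rw [← Real.exp_add]; ring_nf
      linear_combination Real.exp (-(2*t)) * h + (-((φ t)^2 + C/2)) * he + (G 0/4) * hexp
    -- pass to opaque constants
    obtain ⟨A, B, key, hGA⟩ :
        ∃ A B : ℝ, (∀ t, (φ t)^2 + C/2 = B * Real.exp (-(2*t)) + A/4 * Real.exp (2*t)) ∧
          (∀ t, W t + 2*(φ t)^2 + C = A * Real.exp (2*t)) :=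
      ⟨G 0, H 0, key0, hGeq⟩
    have hWval : ∀ t, W t = 2 * φ t * deriv φ t := fun t => rfl
    clear hGd hGconst hGeq hHd hHconst key0 hGdef hHdef hu hW hWdef
    clear G H
    clear_value W
    -- bounds
    have hub : ∀ t, (φ t)^2 ≤ M^2 := by
      intro t
      have h1 := (hmM t).1
      have h2 := (hmM t).2
      nlinarith [hpos t]
    -- A = 0
    have hA0 : A = 0 := by
      by_contra h0
      refine aux_exp_unbounded (a := |A|/4) (K := M^2 + |C|/2 + |B|) (by positivity) (fun t ht => ?_)
      have h := key t
      have h2 : Real.exp (-(2*t)) ≤ 1 := Real.exp_le_one_iff.mpr (by linarith)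
      have h3 : 0 < Real.exp (-(2*t)) := Real.exp_pos _
      have h4 : 0 < Real.exp (2*t) := Real.exp_pos _
      have p3 : |B| * Real.exp (-(2*t)) ≤ |B| := mul_le_of_le_one_right (abs_nonneg _) h2
      have pB1 : B * Real.exp (-(2*t)) ≤ |B| :=
        le_trans (mul_le_mul_of_nonneg_right (le_abs_self B) h3.le) p3
      have pB2 : -|B| ≤ B * Real.exp (-(2*t)) := by
        nlinarith [neg_abs_le B, abs_nonneg B]
      have hc1 : C ≤ |C| := le_abs_self C
      have hc2 : -|C| ≤ C := neg_abs_le C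
      have hub' := hub t
      have hsq := sq_nonneg (φ t)
      rcases abs_cases A with ⟨hA, _⟩ | ⟨hA, _⟩ <;> rw [hA] <;>
        linarith [sq_nonneg M, abs_nonneg B, abs_nonneg C]
    -- B = 0
    have hB0 : B = 0 := by
      by_contra h0
      refine aux_exp_unbounded (a := |B|) (K := M^2 + |C|/2) (abs_pos.mpr h0) (fun t ht => ?_)
      have h := key (-t)
      rw [hA0] at h
      have he : -(2*(-t)) = 2*t := by ring
      rw [he] at h
      -- h : (φ (-t))^2 + C/2 = B * exp (2t) + 0/4 * exp (2(-t))
      have hc1 : C ≤ |C| := le_abs_self C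
      have hc2 : -|C| ≤ C := neg_abs_le C
      have hub' := hub (-t)
      have hsq := sq_nonneg (φ (-t))
      have h4 : 0 < Real.exp (2*(-t)) := Real.exp_pos _
      rcases abs_cases B with ⟨hB, _⟩ | ⟨hB, _⟩ <;> rw [hB] <;>
        linarith [sq_nonneg M, abs_nonneg C]
    -- conclude: φ² is constant, φ' = 0, φ = 1
    have hu0 : ∀ t, (φ t)^2 + C/2 = 0 := by
      intro t
      have h := key t
      rw [hA0, hB0] at h
      simpa using h
    have hW0 : ∀ t, W t = 0 := by
      intro t
      have h := hGA t
      rw [hA0, zero_mul] at h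
      have h2 := hu0 t
      linear_combination h - 2 * h2
    have hderiv0 : ∀ t, deriv φ t = 0 := by
      intro t
      have h : 2 * φ t * deriv φ t = 0 := (hWval t) ▸ hW0 t
      have hφt : φ t ≠ 0 := (hpos t).ne'
      rcases mul_eq_zero.mp h with h1 | h1
      · rcases mul_eq_zero.mp h1 with h2 | h2
        · norm_num at h2
        · exact absurd h2 hφt
      · exact h1
    intro t
    have hdd : deriv (deriv φ) t = 0 := by
      have : deriv φ = fun _ => (0:ℝ) := funext hderiv0
      rw [this]
      simp
    have h := hode t
    rw [hdd] at h
    have hφt := hpos t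
    have h3 : (0:ℝ) < (φ t)^3 := by positivity
    have h4 : (φ t)^4 = 1 := by
      field_simp at h
      nlinarith [h]
    nlinarith [sq_nonneg (φ t - 1), sq_nonneg (φ t + 1), sq_nonneg ((φ t)^2 - 1)]
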